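/- Let R_{ijkl} be an algebraic curvature tensor on ℝⁿ (with the usual symmetries and first Bianchi identity) whose sectional curvatures satisfy δ < K ≤ 1. Then for pairwise distinct indices i, j, k, l, |R_{ijkl}| < (2/3)(1 − δ). -/
import Mathlib


private lemma berger_sq {n : ℕ} (p q : Fin n) (h : p ≠ q) (e : ℝ) :
    ∑ m, ((if m = p then (1:ℝ) else 0) + (if m = q then e else 0))^2 = 1 + e^2 := by
  have key : ∀ m : Fin n, ((if m = p then (1:ℝ) else 0) + (if m = q then e else 0))^2
      = (if m = p then (1:ℝ) else 0) + (if m = q then e^2 else 0) := by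
    intro m
    by_cases h1 : m = p <;> by_cases h2 : m = q <;> simp_all
  simp [key, Finset.sum_add_distrib]

private lemma berger_orth {n : ℕ} (p q r s : Fin n)
    (h1 : p ≠ r) (h2 : p ≠ s) (h3 : q ≠ r) (h4 : q ≠ s) (e f : ℝ) :
    ∑ m, ((if m = p then (1:ℝ) else 0) + (if m = q then e else 0)) *
        ((if m = r then (1:ℝ) else 0) + (if m = s then f else 0)) = 0 := by
  apply Finset.sum_eq_zero
  intro m _
  by_cases hp : m = p <;> by_cases hq : m = q <;> by_cases hr : m = r <;> by_cases hs : m = s <;>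
    simp_all

private lemma berger_expand {n : ℕ} (R : Fin n → Fin n → Fin n → Fin n → ℝ)
    (p q r s : Fin n) (e f : ℝ) :
    (∑ i, ∑ j, ∑ k, ∑ l, R i j k l *
        ((if i = p then (1:ℝ) else 0) + (if i = q then e else 0)) *
        ((if j = r then (1:ℝ) else 0) + (if j = s then f else 0)) *
        ((if k = p then (1:ℝ) else 0) + (if k = q then e else 0)) *
        ((if l = r then (1:ℝ) else 0) + (if l = s then f else 0)))
      = R p r p r + f * R p r p s + e * R p r q r + e*f * R p r q s
        + f * R p s p r + f*f * R p s p s + e*f * R p s q r + e*f*f * R p s q s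
        + e * R q r p r + e*f * R q r p s + e*e * R q r q r + e*e*f * R q r q s
        + e*f * R q s p r + e*f*f * R q s p s + e*e*f * R q s q r + e*e*f*f * R q s q s := by
  simp only [mul_add, add_mul, mul_ite, ite_mul, mul_zero, zero_mul, mul_one, one_mul,
    Finset.sum_add_distrib, Finset.sum_ite_eq', Finset.mem_univ, if_true]
  ring

private lemma berger_key {n : ℕ} {δ : ℝ} {R : Fin n → Fin n → Fin n → Fin n → ℝ}
    (hpinch : ∀ X Y : Fin n → ℝ,
      0 < (∑ i, X i ^ 2) * (∑ i, Y i ^ 2) - (∑ i, X i * Y i) ^ 2 →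
      δ * ((∑ i, X i ^ 2) * (∑ i, Y i ^ 2) - (∑ i, X i * Y i) ^ 2)
          < ∑ i, ∑ j, ∑ k, ∑ l, R i j k l * X i * Y j * X k * Y l ∧
      (∑ i, ∑ j, ∑ k, ∑ l, R i j k l * X i * Y j * X k * Y l)
          ≤ (∑ i, X i ^ 2) * (∑ i, Y i ^ 2) - (∑ i, X i * Y i) ^ 2)
    (p q r s : Fin n) (hpq : p ≠ q) (hrs : r ≠ s)
    (hpr : p ≠ r) (hps : p ≠ s) (hqr : q ≠ r) (hqs : q ≠ s)
    (e f : ℝ) (he : e^2 = 1) (hf : f^2 = 1) :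
    δ * 4 <
      R p r p r + f * R p r p s + e * R p r q r + e*f * R p r q s
        + f * R p s p r + f*f * R p s p s + e*f * R p s q r + e*f*f * R p s q s
        + e * R q r p r + e*f * R q r p s + e*e * R q r q r + e*e*f * R q r q s
        + e*f * R q s p r + e*f*f * R q s p s + e*e*f * R q s q r + e*e*f*f * R q s q s ∧
      R p r p r + f * R p r p s + e * R p r q r + e*f * R p r q s
        + f * R p s p r + f*f * R p s p s + e*f * R p s q r + e*f*f * R p s q s
        + e * R q r p r + e*f * R q r p s + e*e * R q r q r + e*e*f * R q r q s
        + e*f * R q s p r + e*f*f * R q s p s + e*e*f * R q s q r + e*e*f*f * R q s q s ≤ 4 := by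
  have h := hpinch (fun m => (if m = p then (1:ℝ) else 0) + (if m = q then e else 0))
      (fun m => (if m = r then (1:ℝ) else 0) + (if m = s then f else 0))
  rw [berger_sq p q hpq, berger_sq r s hrs, berger_orth p q r s hpr hps hqr hqs,
    berger_expand] at h
  rw [he, hf] at h
  norm_num at h
  exact h

/-- Berger's estimate: an algebraic curvature tensor on ℝⁿ whose sectional
curvatures K(X,Y) = R(X,Y,X,Y)/(|X|²|Y|² − ⟨X,Y⟩²) all lie in (δ, 1] satisfies
|R_{ijkl}| < (2/3)(1−δ) for pairwise distinct indices. -/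
theorem stmt_11 (n : ℕ) (δ : ℝ)
    (R : Fin n → Fin n → Fin n → Fin n → ℝ)
    (hanti₁ : ∀ i j k l, R i j k l = -R j i k l)
    (hanti₂ : ∀ i j k l, R i j k l = -R i j l k)
    (hsymm : ∀ i j k l, R i j k l = R k l i j)
    (hbianchi : ∀ i j k l, R i j k l + R i k l j + R i l j k = 0)
    (hpinch : ∀ X Y : Fin n → ℝ,
      0 < (∑ i, X i ^ 2) * (∑ i, Y i ^ 2) - (∑ i, X i * Y i) ^ 2 →
      δ * ((∑ i, X i ^ 2) * (∑ i, Y i ^ 2) - (∑ i, X i * Y i) ^ 2)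
          < ∑ i, ∑ j, ∑ k, ∑ l, R i j k l * X i * Y j * X k * Y l ∧
      (∑ i, ∑ j, ∑ k, ∑ l, R i j k l * X i * Y j * X k * Y l)
          ≤ (∑ i, X i ^ 2) * (∑ i, Y i ^ 2) - (∑ i, X i * Y i) ^ 2) :
    ∀ i j k l : Fin n, i ≠ j → i ≠ k → i ≠ l → j ≠ k → j ≠ l → k ≠ l →
      |R i j k l| < 2/3 * (1 - δ) := by
  intro i j k l hij hik hil hjk hjl hkl
  have one : (1:ℝ)^2 = 1 := by norm_num
  have mone : (-1:ℝ)^2 = 1 := by norm_num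
  have A11 := berger_key hpinch i k j l hik hjl hij hil hjk.symm hkl 1 1 one one
  have A1m := berger_key hpinch i k j l hik hjl hij hil hjk.symm hkl 1 (-1) one mone
  have Am1 := berger_key hpinch i k j l hik hjl hij hil hjk.symm hkl (-1) 1 mone one
  have Amm := berger_key hpinch i k j l hik hjl hij hil hjk.symm hkl (-1) (-1) mone mone
  have B11 := berger_key hpinch i l j k hil hjk hij hik hjl.symm hkl.symm 1 1 one one
  have B1m := berger_key hpinch i l j k hil hjk hij hik hjl.symm hkl.symm 1 (-1) one mone
  have Bm1 := berger_key hpinch i l j k hil hjk hij hik hjl.symm hkl.symm (-1) 1 mone one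
  have Bmm := berger_key hpinch i l j k hil hjk hij hik hjl.symm hkl.symm (-1) (-1) mone mone
  have e1 := hsymm i l i j
  have e2 := hsymm k j i j
  have e3 := hsymm k l i l
  have e4 := hsymm k l k j
  have e5 := hsymm k j i l
  have e6 := hsymm k l i j
  have e7 := hanti₂ i l k j
  have f1 := hsymm i k i j
  have f2 := hsymm l j i j
  have f3 := hsymm l k i k
  have f4 := hsymm l k l j
  have f5 := hsymm l j i k
  have f6 := hsymm l k i j
  have f7 := hanti₂ i j k l
  have bi := hbianchi i j k l
  rw [abs_lt]
  constructor <;>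
    linarith [A11.1, A11.2, A1m.1, A1m.2, Am1.1, Am1.2, Amm.1, Amm.2,
      B11.1, B11.2, B1m.1, B1m.2, Bm1.1, Bm1.2, Bmm.1, Bmm.2]
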